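/- Let p be a prime, and let r, b, c, m be nonnegative integers with 2 ≤ b ≤ p, r ≡ b (mod p−1), r ≥ b + c(p−1) + 1, and 0 ≤ m ≤ min(c−1, p−1); assume moreover b − 2m − 1 ≥ 0 (so the relevant exponents are nonnegative). For 0 ≤ i ≤ c set q(i) = x^{r−b+m−i(p−1)} · y^{b−m+i(p−1)} ∈ F_p[x,y]. Then for every integer a with 1 ≤ a ≤ c − m, the polynomial q(c−m−a) − Σ_{i=1}^{m+1} (-1)^{i+1} β(a,i) · q(c−m−1+i) is divisible by θ^{m+1} in F_p[x,y], where β(a,i) = C(i+a−2, a−1)·C(m+a, i+a−1) and θ = x^p y − x y^p. -/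

import Mathlib

open Finset

lemma choose_mul' {n k s : ℕ} (hsk : s ≤ k) :
    n.choose k * k.choose s = n.choose s * (n - s).choose (k - s) := by
  rcases le_or_gt k n with h | h
  · exact Nat.choose_mul hsk
  · rw [Nat.choose_eq_zero_of_lt h, Nat.zero_mul]
    rcases le_or_gt s n with hs | hs
    · rw [Nat.choose_eq_zero_of_lt (n := n - s) (k := k - s) (by omega), Nat.mul_zero]
    · rw [Nat.choose_eq_zero_of_lt hs, Nat.zero_mul]

lemma beta_rec (m a j : ℕ) :
    (j+a+1).choose (a+1) * (m+a+2).choose (j+a+2)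
      + (j+a+1).choose a * (m+a+1).choose (j+a+2)
    = (m+a+1).choose (a+1) * (m+1).choose (j+1) := by
  have pas : (m+a+2).choose (j+a+2) = (m+a+1).choose (j+a+1) + (m+a+1).choose (j+a+2) := by
    have := Nat.choose_succ_succ (m+a+1) (j+a+1)
    simpa [show m+a+1+1 = m+a+2 by omega, show j+a+1+1 = j+a+2 by omega] using this
  have pas2 : (j+a+2).choose (a+1) = (j+a+1).choose a + (j+a+1).choose (a+1) := by
    have := Nat.choose_succ_succ (j+a+1) a
    simpa [show j+a+1+1 = j+a+2 by omega] using this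
  have pas3 : (m+1).choose (j+1) = m.choose j + m.choose (j+1) := Nat.choose_succ_succ m j
  have t1 : (m+a+1).choose (j+a+1) * (j+a+1).choose (a+1) = (m+a+1).choose (a+1) * m.choose j := by
    have := choose_mul' (n := m+a+1) (k := j+a+1) (s := a+1) (by omega)
    simpa [show m+a+1-(a+1) = m by omega, show j+a+1-(a+1) = j by omega] using this
  have t2 : (m+a+1).choose (j+a+2) * (j+a+2).choose (a+1) = (m+a+1).choose (a+1) * m.choose (j+1) := by
    have := choose_mul' (n := m+a+1) (k := j+a+2) (s := a+1) (by omega)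
    simpa [show m+a+1-(a+1) = m by omega, show j+a+2-(a+1) = j+1 by omega] using this
  zify at pas pas2 pas3 t1 t2 ⊢
  linear_combination (((j+a+1).choose (a+1) : ℤ)) * pas - (((m+a+1).choose (j+a+2) : ℤ)) * pas2 + t1 + t2 - (((m+a+1).choose (a+1) : ℤ)) * pas3

noncomputable def Dfun {R : Type*} [CommRing R] (t s : R) (m a : ℕ) : R :=
  t^(m+a+1) - ∑ j ∈ Finset.range (m+1),
    (-1:R)^j * ((j+a).choose a * (m+a+1).choose (j+a+1) : ℕ) * t^(m-j) * s^(a+j+1)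

lemma Dfun_zero {R : Type*} [CommRing R] (t s : R) (m : ℕ) :
    Dfun t s m 0 = (t - s)^(m+1) := by
  have expand : (t - s)^(m+1) = t^(m+1)
      + ∑ j ∈ Finset.range (m+1), (-1:R)^(j+1) * ((m+1).choose (j+1) : ℕ) * t^(m-j) * s^(j+1) := by
    rw [sub_pow]
    conv_lhs => rw [Finset.sum_range_succ, ← Finset.sum_range_reflect]
    have hf : ((-1:R))^((m+1)+(m+1)) * t^(m+1) * s^(m+1-(m+1)) * ((m+1).choose (m+1) : ℕ) = t^(m+1) := by
      rw [show m+1+(m+1) = 2*(m+1) by omega, pow_mul, neg_one_sq, one_pow]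
      simp
    rw [hf, add_comm]
    congr 1
    apply Finset.sum_congr rfl
    intro j hj
    rw [Finset.mem_range] at hj
    have h4 : ((-1:R))^((m+1-1-j)+(m+1)) = ((-1:R))^(j+1) := by
      rw [show (m+1-1-j)+(m+1) = 2*(m-j)+(j+1) by omega, pow_add, pow_mul, neg_one_sq, one_pow, one_mul]
    rw [h4, show m+1-1-j = m-j by omega, show m+1-(m-j) = j+1 by omega,
        show (m+1).choose (m-j) = (m+1).choose (j+1) from by
          rw [show m-j = (m+1)-(j+1) by omega]; exact Nat.choose_symm (by omega)]
    ring
  rw [Dfun, expand]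
  have hAB : ∑ j ∈ Finset.range (m+1),
      (-1:R)^j * ((j+0).choose 0 * (m+0+1).choose (j+0+1) : ℕ) * t^(m-j) * s^(0+j+1)
      = ∑ j ∈ Finset.range (m+1),
        -((-1:R)^(j+1) * ((m+1).choose (j+1) : ℕ) * t^(m-j) * s^(j+1)) := by
    apply Finset.sum_congr rfl
    intro j hj
    simp only [Nat.add_zero, Nat.choose_zero_right]
    push_cast
    ring
  rw [hAB, Finset.sum_neg_distrib]
  ring

lemma Dfun_step {R : Type*} [CommRing R] (t s : R) (m a : ℕ) :
    Dfun t s m (a+1) = t * Dfun t s m a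
      + (((m+a+1).choose (a+1) : ℕ) : R) * s^(a+1) * (t-s)^(m+1) := by
  rw [← Dfun_zero t s m, Dfun, Dfun, Dfun, mul_sub, mul_sub, Finset.mul_sum, Finset.mul_sum]
  have Hz : t * ((-1:R)^(m+1) * (((m+1)+a).choose a * (m+a+1).choose ((m+1)+a+1) : ℕ) * t^(m-(m+1)) * s^(a+(m+1)+1)) = 0 := by
    rw [Nat.choose_eq_zero_of_lt (n := m+a+1) (k := (m+1)+a+1) (by omega)]
    push_cast; ring
  have Hsplit : ∑ j ∈ Finset.range (m+1),
        t * ((-1:R)^j * ((j+a).choose a * (m+a+1).choose (j+a+1) : ℕ) * t^(m-j) * s^(a+j+1))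
      = (∑ j ∈ Finset.range (m+1),
          t * ((-1:R)^(j+1) * (((j+1)+a).choose a * (m+a+1).choose ((j+1)+a+1) : ℕ) * t^(m-(j+1)) * s^(a+(j+1)+1)))
        + t * ((-1:R)^0 * ((0+a).choose a * (m+a+1).choose (0+a+1) : ℕ) * t^(m-0) * s^(a+0+1))
        - t * ((-1:R)^(m+1) * (((m+1)+a).choose a * (m+a+1).choose ((m+1)+a+1) : ℕ) * t^(m-(m+1)) * s^(a+(m+1)+1)) := by
    rw [Finset.sum_range_succ'
      (fun j => t * ((-1:R)^j * ((j+a).choose a * (m+a+1).choose (j+a+1) : ℕ) * t^(m-j) * s^(a+j+1))) m,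
      Finset.sum_range_succ
      (fun j => t * ((-1:R)^(j+1) * (((j+1)+a).choose a * (m+a+1).choose ((j+1)+a+1) : ℕ) * t^(m-(j+1)) * s^(a+(j+1)+1))) m]
    ring
  have H0 : t * ((-1:R)^0 * ((0+a).choose a * (m+a+1).choose (0+a+1) : ℕ) * t^(m-0) * s^(a+0+1))
      = (((m+a+1).choose (a+1) : ℕ) : R) * s^(a+1) * t^(m+0+1) := by
    rw [show (0:ℕ)+a+1 = a+1 from by omega, show (0:ℕ)+a = a from by omega, Nat.choose_self, Nat.sub_zero]
    push_cast
    ring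
  have Hsum : ∑ j ∈ Finset.range (m+1),
        (-1:R)^j * ((j+(a+1)).choose (a+1) * (m+(a+1)+1).choose (j+(a+1)+1) : ℕ) * t^(m-j) * s^((a+1)+j+1)
      = ∑ j ∈ Finset.range (m+1),
        (t * ((-1:R)^(j+1) * (((j+1)+a).choose a * (m+a+1).choose ((j+1)+a+1) : ℕ) * t^(m-(j+1)) * s^(a+(j+1)+1))
         + ((((m+a+1).choose (a+1) : ℕ) : R) * s^(a+1)) * ((-1:R)^j * ((j+0).choose 0 * (m+0+1).choose (j+0+1) : ℕ) * t^(m-j) * s^(0+j+1))) := by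
    apply Finset.sum_congr rfl
    intro j hj
    rw [Finset.mem_range] at hj
    have hb : ((j+a+1).choose (a+1) : R) * ((m+a+2).choose (j+a+2) : ℕ)
        + ((j+a+1).choose a : ℕ) * ((m+a+1).choose (j+a+2) : ℕ)
        = ((m+a+1).choose (a+1) : ℕ) * ((m+1).choose (j+1) : ℕ) := by
      exact_mod_cast congrArg (Nat.cast (R := R)) (beta_rec m a j)
    rw [show j+(a+1)+1 = j+a+2 by omega, show j+(a+1) = j+a+1 by omega,
        show m+(a+1)+1 = m+a+2 by omega,
        show (j+1)+a+1 = j+a+2 by omega, show (j+1)+a = j+a+1 by omega,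
        show j+0+1 = j+1 by omega, show j+0 = j by omega,
        show m+0+1 = m+1 by omega, Nat.choose_zero_right]
    push_cast
    rcases eq_or_lt_of_le (Nat.lt_succ_iff.mp hj) with hjm | hjm
    · have hz : ((m+a+1).choose (j+a+2) : R) = 0 := by
        rw [Nat.choose_eq_zero_of_lt (by omega), Nat.cast_zero]
      rw [hz] at hb ⊢
      linear_combination ((-1:R))^j * t^(m-j) * s^(a+j+2) * hb
    · have hpow : t * t^(m-(j+1)) = t^(m-j) := by
        rw [show m-j = (m-(j+1))+1 by omega, pow_succ]; ring
      linear_combination ((-1:R))^j * t^(m-j) * s^(a+j+2) * hb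
        + ((-1:R))^j * ((j+a+1).choose a : R) * ((m+a+1).choose (j+a+2) : R) * s^(a+j+2) * hpow
  rw [Finset.sum_add_distrib] at Hsum
  linear_combination Hsplit - Hsum + H0 - Hz

lemma Dfun_dvd {R : Type*} [CommRing R] (t s : R) (m a : ℕ) :
    (t - s)^(m+1) ∣ Dfun t s m a := by
  induction a with
  | zero => rw [Dfun_zero]
  | succ a ih =>
    rw [Dfun_step]
    exact dvd_add (ih.mul_left t) (Dvd.dvd.mul_left dvd_rfl _)



open MvPolynomial

/-- θ^{m+1} divides q(c−m−a) − Σ_{i=1}^{m+1} (−1)^{i+1} β(a,i) q(c−m−1+i). -/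
theorem stmt_13 (p r b c m : ℕ) (hp : p.Prime)
    (hb1 : 2 ≤ b) (hb2 : b ≤ p) (hmod : r ≡ b [MOD p - 1])
    (hr : b + c * (p - 1) + 1 ≤ r)
    (hmc : m + 1 ≤ c) (hmp : m + 1 ≤ p) (hbm : 2 * m + 1 ≤ b)
    (a : ℕ) (ha1 : 1 ≤ a) (ha2 : a ≤ c - m) :
    let θ : MvPolynomial (Fin 2) (ZMod p) := X 0 ^ p * X 1 - X 0 * X 1 ^ p
    let q : ℕ → MvPolynomial (Fin 2) (ZMod p) := fun i =>
      X 0 ^ (r - b + m - i * (p - 1)) * X 1 ^ (b - m + i * (p - 1))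
    θ ^ (m + 1) ∣
      q (c - m - a) -
        ∑ i ∈ Finset.Icc 1 (m + 1),
          (-1 : MvPolynomial (Fin 2) (ZMod p)) ^ (i + 1) *
            C ((((i + a - 2).choose (a - 1)) * ((m + a).choose (i + a - 1)) : ZMod p)) *
            q (c - m - 1 + i) := by
  intro θ q
  obtain ⟨a', rfl⟩ : ∃ a', a = a' + 1 := ⟨a - 1, by omega⟩
  have hp2 : 2 ≤ p := hp.two_le
  have hθ : θ = X 0 ^ p * X 1 - X 0 * X 1 ^ p := rfl
  have hq : ∀ i, q i = X 0 ^ (r - b + m - i * (p - 1)) * X 1 ^ (b - m + i * (p - 1)) :=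
    fun _ => rfl
  set T : MvPolynomial (Fin 2) (ZMod p) := X 0 ^ (p - 1) with hT
  set S : MvPolynomial (Fin 2) (ZMod p) := X 1 ^ (p - 1) with hS
  set E0 := r - b + m - c * (p - 1) with hE0
  set E1 := b - m + (c - m - (a' + 1)) * (p - 1) with hE1
  have hcP : c * (p - 1) + 1 ≤ r - b := by omega
  have hsubx : ∀ w v : ℕ, w + v = c → r - b + m - w * (p - 1) = E0 + v * (p - 1) := by
    intro w v hwv
    have h1 : w * (p - 1) + v * (p - 1) = c * (p - 1) := by rw [← Nat.add_mul, hwv]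
    omega
  have haddy : ∀ w v : ℕ, w = (c - m - (a' + 1)) + v → b - m + w * (p - 1) = E1 + v * (p - 1) := by
    intro w v hwv
    have h1 : (c - m - (a' + 1)) * (p - 1) + v * (p - 1) = w * (p - 1) := by
      rw [← Nat.add_mul, ← hwv]
    omega
  have hθfact : θ ^ (m + 1) = X 0 ^ (m + 1) * X 1 ^ (m + 1) * (T - S) ^ (m + 1) := by
    have h0 : (X 0 : MvPolynomial (Fin 2) (ZMod p)) ^ p = X 0 * T := by
      rw [hT, ← pow_succ']
      congr 1
      omega
    have h1 : (X 1 : MvPolynomial (Fin 2) (ZMod p)) ^ p = X 1 * S := by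
      rw [hS, ← pow_succ']
      congr 1
      omega
    have hbase : θ = X 0 * X 1 * (T - S) := by rw [hθ, h0, h1]; ring
    rw [hbase, mul_pow, mul_pow]
  have hq1 : q (c - m - (a' + 1)) = X 0 ^ E0 * X 1 ^ E1 * T ^ (m + a' + 1) := by
    rw [hq, hsubx (c - m - (a' + 1)) (m + a' + 1) (by omega), hT]
    rw [haddy (c - m - (a' + 1)) 0 (by omega)]
    ring
  have hCn : ∀ n : ℕ, (MvPolynomial.C ((n : ZMod p)) : MvPolynomial (Fin 2) (ZMod p)) = ((n : ℕ) : MvPolynomial (Fin 2) (ZMod p)) := fun n => by simp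
  have keyEq : q (c - m - (a' + 1)) -
      ∑ i ∈ Finset.Icc 1 (m + 1),
        (-1 : MvPolynomial (Fin 2) (ZMod p)) ^ (i + 1) *
          C ((((i + (a' + 1) - 2).choose ((a' + 1) - 1)) * ((m + (a' + 1)).choose (i + (a' + 1) - 1)) : ZMod p)) *
          q (c - m - 1 + i)
      = X 0 ^ E0 * X 1 ^ E1 * Dfun T S m a' := by
    rw [← Finset.Ico_add_one_right_eq_Icc, Finset.sum_Ico_eq_sum_range]
    simp only [Nat.succ_sub_one, Nat.add_sub_cancel]
    rw [Dfun, mul_sub, Finset.mul_sum]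
    refine congrArg₂ (· - ·) hq1 ?_
    apply Finset.sum_congr rfl
    intro j hj
    rw [Finset.mem_range] at hj
    rw [show 1 + j + (a' + 1) - 2 = j + a' by omega,
        show 1 + j + (a' + 1) - 1 = j + a' + 1 by omega,
        show m + (a' + 1) = m + a' + 1 by omega,
        show c - m - 1 + (1 + j) = (c - m - (a' + 1)) + (a' + 1 + j) by omega,
        hq]
    rw [hsubx ((c - m - (a' + 1)) + (a' + 1 + j)) (m - j) (by omega),
        haddy ((c - m - (a' + 1)) + (a' + 1 + j)) (a' + 1 + j) (by omega)]
    rw [show ((((j + a').choose a' : ℕ) : ZMod p) * (((m + a' + 1).choose (j + a' + 1) : ℕ) : ZMod p))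
          = (((j + a').choose a' * (m + a' + 1).choose (j + a' + 1) : ℕ) : ZMod p) by push_cast; ring,
        hCn]
    rw [hT, hS]
    push_cast
    ring
  obtain ⟨g, hg⟩ := Dfun_dvd T S m a'
  refine ⟨X 0 ^ (E0 - (m + 1)) * X 1 ^ (E1 - (m + 1)) * g, ?_⟩
  rw [keyEq, hg, hθfact]
  have hE0ge : m + 1 ≤ E0 := by omega
  have hE1ge : m + 1 ≤ E1 := by omega
  conv_lhs => rw [show E0 = (m + 1) + (E0 - (m + 1)) by omega,
                  show E1 = (m + 1) + (E1 - (m + 1)) by omega]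
  ring
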